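/- arXiv:2605.03493 — 7 statements merged into one kernel-verified Lean document; each statement's English description precedes it below -/
import Mathlib

section
/- Regret of Exp3-SET. Fix N actions and T rounds. An oblivious adversary fixes, for every round t, a loss vector ℓ_t ∈ [0,1]^N and an undirected graph G_t on the node set [N] (every node is considered adjacent to itself, so the learner always observes its own loss). Exp3-SET maintains loss estimates: at round t it draws I_t from the distribution p_t with p_{t,i} ∝ exp(−η·Σ_{s<t} ℓ̂_{s,i}), observes ℓ_{t,j} for all j in the closed neighborhood of I_t in G_t, and sets ℓ̂_{t,i} = ℓ_{t,i}·1{i ∈ N_t[I_t]} / o_{t,i} where N_t[i] is the closed neighborhood of i in G_t and o_{t,i} = Σ_{j∈N_t[i]} p_{t,j}. If the learning rate is set to η = √( 2·log N / Σ_{t=1}^T α_t ), where α_t is the independence number of G_t, then the expected regret satisfies R_T = max_{k∈[N]} E[ Σ_{t=1}^T ( ℓ_{t,I_t} − ℓ_{t,k} ) ] ≤ √( 2·( Σ_{t=1}^T α_t )·log N ). -/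
/-- The independence number of the (undirected) graph on `Fin N` with adjacency
predicate `Adj`: the maximum cardinality of a set of vertices no two (distinct)
of which are adjacent. -/
def independenceNumber (N : ℕ) (Adj : Fin N → Fin N → Bool) : ℕ :=
  Finset.sup
    ((Finset.univ : Finset (Fin N)).powerset.filter
      fun S => ∀ a ∈ S, ∀ b ∈ S, a ≠ b → Adj a b = false)
    Finset.card

/-- One step of the Exp3-SET expected-loss recursion.
`exp3setExpectedLoss N η ℓ Adj n t Lhat` is the expected total loss incurred by
Exp3-SET (with learning rate `η`, losses `ℓ`, observation graphs given by `Adj`,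
every node adjacent to itself for observation purposes) over the `n` rounds
`t, t+1, …, t+n−1`, starting from the vector `Lhat` of cumulative loss estimates.
At each round the algorithm draws `I` from the exponential-weights distribution
`p i ∝ exp(−η Lhat i)`, incurs `ℓ t I`, observes the losses in the closed
neighborhood of `I`, and updates the estimates by
`ℓ̂ i = ℓ t i · 1{i ∈ N_t[I]} / o_i` with `o_i = Σ_{j ∈ N_t[i]} p j`. -/
noncomputable def exp3setExpectedLoss (N : ℕ) (η : ℝ) (ℓ : ℕ → Fin N → ℝ)
    (Adj : ℕ → Fin N → Fin N → Bool) :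
    ℕ → ℕ → (Fin N → ℝ) → ℝ
  | 0, _, _ => 0
  | n + 1, t, Lhat =>
      let p : Fin N → ℝ :=
        fun i => Real.exp (-η * Lhat i) / ∑ j, Real.exp (-η * Lhat j)
      let o : Fin N → ℝ :=
        fun i => ∑ j, if i = j ∨ Adj t i j = true then p j else 0
      ∑ I, p I *
        (ℓ t I +
          exp3setExpectedLoss N η ℓ Adj n (t + 1)
            (fun i => Lhat i + if i = I ∨ Adj t I i = true then ℓ t i / o i else 0))

lemma exp_neg_le_quad {x : ℝ} (hx : 0 ≤ x) : Real.exp (-x) ≤ 1 - x + x ^ 2 / 2 := by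
  have hd : ∀ y : ℝ, HasDerivAt (fun y : ℝ => Real.exp y * (1 - y + y ^ 2 / 2))
      (Real.exp y * (y ^ 2 / 2)) y := by
    intro y
    have h1 : HasDerivAt Real.exp (Real.exp y) y := Real.hasDerivAt_exp y
    have h2 : HasDerivAt (fun y : ℝ => 1 - y + y ^ 2 / 2) (-1 + (2 * y ^ 1) / 2) y := by
      exact (((hasDerivAt_id y).const_sub 1).add ((hasDerivAt_pow 2 y).div_const 2))
    have := h1.mul h2
    exact this.congr_deriv (by ring)
  have hmono : Monotone (fun y : ℝ => Real.exp y * (1 - y + y ^ 2 / 2)) := by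
    apply monotone_of_deriv_nonneg
    · exact fun y => (hd y).differentiableAt
    · intro y
      rw [(hd y).deriv]
      positivity
  have h0 : (1 : ℝ) ≤ Real.exp x * (1 - x + x ^ 2 / 2) := by
    have := hmono hx
    simpa using this
  have hpos := Real.exp_pos x
  have hinv : Real.exp (-x) * Real.exp x = 1 := by
    rw [← Real.exp_add]; simp
  nlinarith [Real.exp_pos (-x)]


def indepOn {N : ℕ} (A : Fin N → Fin N → Bool) (s : Finset (Fin N)) : ℕ :=
  (s.powerset.filter fun S => ∀ a ∈ S, ∀ b ∈ S, a ≠ b → A a b = false).sup Finset.card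

lemma indepOn_univ {N : ℕ} (A : Fin N → Fin N → Bool) :
    indepOn A Finset.univ = independenceNumber N A := rfl

lemma ratio_le_indepOn {N : ℕ} (A : Fin N → Fin N → Bool)
    (hsym : ∀ i j, A i j = A j i) (p : Fin N → ℝ) (hp : ∀ i, 0 < p i) :
    ∀ s : Finset (Fin N),
      (∑ i ∈ s, p i / ∑ j ∈ s.filter (fun j => i = j ∨ A i j = true), p j)
        ≤ (indepOn A s : ℝ) := by
  intro s
  induction s using Finset.strongInduction with
  | _ s ih =>
    rcases s.eq_empty_or_nonempty with rfl | hs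
    · simp
    · set O : Fin N → ℝ := fun i => ∑ j ∈ s.filter (fun j => i = j ∨ A i j = true), p j with hO
      obtain ⟨v, hv, hmin⟩ := s.exists_min_image O hs
      have hOpos : ∀ i ∈ s, 0 < O i := by
        intro i hi
        refine lt_of_lt_of_le (hp i) ?_
        refine Finset.single_le_sum (fun j _ => (hp j).le) ?_
        simp [Finset.mem_filter, hi]
      set B : Finset (Fin N) := s.filter (fun j => ¬(v = j ∨ A v j = true)) with hB
      have hBss : B ⊂ s := Finset.filter_ssubset.mpr ⟨v, hv, by simp⟩
      -- split the sum
      have hsplit : (∑ i ∈ s, p i / O i) =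
          (∑ i ∈ s.filter (fun j => v = j ∨ A v j = true), p i / O i) +
          (∑ i ∈ B, p i / O i) :=
        (Finset.sum_filter_add_sum_filter_not s _ _).symm
      -- part 1
      have h1 : (∑ i ∈ s.filter (fun j => v = j ∨ A v j = true), p i / O i) ≤ 1 := by
        have hle : (∑ i ∈ s.filter (fun j => v = j ∨ A v j = true), p i / O i) ≤
            (∑ i ∈ s.filter (fun j => v = j ∨ A v j = true), p i / O v) := by
          refine Finset.sum_le_sum fun i hi => ?_
          exact div_le_div_of_nonneg_left (hp i).le (hOpos v hv)
            (hmin i (Finset.mem_of_mem_filter i hi))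
        rw [← Finset.sum_div] at hle
        have : (∑ i ∈ s.filter (fun j => v = j ∨ A v j = true), p i) = O v := rfl
        rw [this, div_self (hOpos v hv).ne'] at hle
        exact hle
      -- part 2
      have h2 : (∑ i ∈ B, p i / O i) ≤ (indepOn A B : ℝ) := by
        refine le_trans ?_ (ih B hBss)
        refine Finset.sum_le_sum fun i hi => ?_
        have hiB : i ∈ B := hi
        have hIs : i ∈ s := Finset.mem_of_mem_filter i hi
        have hsub : B.filter (fun j => i = j ∨ A i j = true) ⊆
            s.filter (fun j => i = j ∨ A i j = true) :=
          Finset.filter_subset_filter _ hBss.subset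
        have hOBpos : 0 < ∑ j ∈ B.filter (fun j => i = j ∨ A i j = true), p j := by
          refine lt_of_lt_of_le (hp i) ?_
          refine Finset.single_le_sum (fun j _ => (hp j).le) ?_
          simp [Finset.mem_filter, hiB]
        exact div_le_div_of_nonneg_left (hp i).le hOBpos
          (Finset.sum_le_sum_of_subset_of_nonneg hsub fun j _ _ => (hp j).le)
      -- indepOn B + 1 ≤ indepOn s
      have hne : (B.powerset.filter fun S => ∀ a ∈ S, ∀ b ∈ S, a ≠ b → A a b = false).Nonempty := by
        refine ⟨∅, ?_⟩
        simp
      obtain ⟨M, hM, hcard⟩ := Finset.exists_mem_eq_sup _ hne Finset.card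
      rw [Finset.mem_filter, Finset.mem_powerset] at hM
      have hvB : v ∉ B := by simp [hB]
      have hvM : v ∉ M := fun h => hvB (hM.1 h)
      have hkey : indepOn A B + 1 ≤ indepOn A s := by
        have hmem : insert v M ∈ s.powerset.filter
            fun S => ∀ a ∈ S, ∀ b ∈ S, a ≠ b → A a b = false := by
          rw [Finset.mem_filter, Finset.mem_powerset]
          constructor
          · exact Finset.insert_subset hv (hM.1.trans hBss.subset)
          · intro a ha b hb hab
            rcases Finset.mem_insert.mp ha with rfl | haM
            · rcases Finset.mem_insert.mp hb with rfl | hbM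
              · exact absurd rfl hab
              · have := hM.1 hbM
                rw [hB, Finset.mem_filter] at this
                push_neg at this
                simpa using this.2.2
            · rcases Finset.mem_insert.mp hb with rfl | hbM
              · have := hM.1 haM
                rw [hB, Finset.mem_filter] at this
                push_neg at this
                rw [hsym]
                simpa using this.2.2
              · exact hM.2 a haM b hbM hab
        have := Finset.le_sup (f := Finset.card) hmem
        rw [Finset.card_insert_of_notMem hvM] at this
        unfold indepOn
        omega
      have hrw : (∑ i ∈ s, p i / ∑ j ∈ Finset.filter (fun j => i = j ∨ A i j = true) s, p j)
          = ∑ i ∈ s, p i / O i := rfl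
      rw [hrw, hsplit]
      have : (indepOn A B : ℝ) + 1 ≤ (indepOn A s : ℝ) := by exact_mod_cast hkey
      linarith

lemma ratio_le_indep {N : ℕ} (A : Fin N → Fin N → Bool)
    (hsym : ∀ i j, A i j = A j i) (p : Fin N → ℝ) (hp : ∀ i, 0 < p i) :
    (∑ i, p i / ∑ j, if i = j ∨ A i j = true then p j else 0)
      ≤ (independenceNumber N A : ℝ) := by
  have h := ratio_le_indepOn A hsym p hp Finset.univ
  rw [indepOn_univ] at h
  refine le_trans (le_of_eq ?_) h
  refine Finset.sum_congr rfl fun i _ => ?_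
  congr 1
  exact (Finset.sum_filter _ _).symm

lemma one_le_indep {N : ℕ} (hN : 0 < N) (A : Fin N → Fin N → Bool) :
    1 ≤ independenceNumber N A := by
  have hmem : ({⟨0, hN⟩} : Finset (Fin N)) ∈
      ((Finset.univ : Finset (Fin N)).powerset.filter
        fun S => ∀ a ∈ S, ∀ b ∈ S, a ≠ b → A a b = false) := by
    rw [Finset.mem_filter, Finset.mem_powerset]
    refine ⟨Finset.subset_univ _, ?_⟩
    intro a ha b hb hab
    rw [Finset.mem_singleton] at ha hb
    exact absurd (ha.trans hb.symm) hab
  have := Finset.le_sup (f := Finset.card) hmem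
  rw [Finset.card_singleton] at this
  exact this

lemma exp3_one (η : ℝ) (ℓ : ℕ → Fin 1 → ℝ) (Adj : ℕ → Fin 1 → Fin 1 → Bool) :
    ∀ n t Lhat, exp3setExpectedLoss 1 η ℓ Adj n t Lhat
      = ∑ s ∈ Finset.Ico t (t + n), ℓ s 0 := by
  intro n
  induction n with
  | zero => intro t Lhat; rw [exp3setExpectedLoss]; simp
  | succ n ih =>
    intro t Lhat
    rw [exp3setExpectedLoss]
    simp only [Fin.sum_univ_one]
    rw [ih]
    have h1 : Real.exp (-η * Lhat 0) / Real.exp (-η * Lhat 0) = 1 :=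
      div_self (Real.exp_ne_zero _)
    rw [h1, one_mul]
    have h2 : t + (n + 1) = t + 1 + n := by omega
    rw [h2]
    exact (Finset.sum_eq_sum_Ico_succ_bot (show t < t + 1 + n by omega) (fun s => ℓ s 0)).symm

lemma round_core {N : ℕ} {η : ℝ} (hη : 0 < η)
    (A : Fin N → Fin N → Bool) (hsym : ∀ i j, A i j = A j i)
    (ℓt : Fin N → ℝ) (hℓ0 : ∀ i, 0 ≤ ℓt i) (hℓ1 : ∀ i, ℓt i ≤ 1)
    (Lhat : Fin N → ℝ) (W : ℝ) (hWdef : W = ∑ j, Real.exp (-η * Lhat j))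
    (p o : Fin N → ℝ)
    (hpdef : ∀ i, p i = Real.exp (-η * Lhat i) / W)
    (hodef : ∀ i, o i = ∑ j, if i = j ∨ A i j = true then p j else 0)
    (k : Fin N) :
    ∑ I, p I * (ℓt I +
        ((1 / η) * Real.log (∑ j, Real.exp (-η * (Lhat j +
            (if j = I ∨ A I j = true then ℓt j / o j else 0)))) +
          (Lhat k + (if k = I ∨ A I k = true then ℓt k / o k else 0))))
      ≤ (1 / η) * Real.log W + Lhat k + ℓt k
          + (η / 2) * (independenceNumber N A : ℝ) := by
  have hW : 0 < W := by
    rw [hWdef]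
    exact Finset.sum_pos (fun j _ => Real.exp_pos _) ⟨k, Finset.mem_univ k⟩
  have hp : ∀ i, 0 < p i := fun i => (hpdef i) ▸ div_pos (Real.exp_pos _) hW
  have hpsum : (∑ i, p i) = 1 := by
    simp only [hpdef]
    rw [← Finset.sum_div, ← hWdef, div_self hW.ne']
  have ho_pos : ∀ i, 0 < o i := by
    intro i
    rw [hodef i]
    refine lt_of_lt_of_le (hp i) ?_
    refine le_trans (le_of_eq ?_) (Finset.single_le_sum
      (f := fun j => if i = j ∨ A i j = true then p j else 0)
      (fun j _ => by split <;> simp [(hp j).le]) (Finset.mem_univ i))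
    simp
  -- unbiasedness
  have hub : ∀ c : Fin N,
      (∑ I, p I * (if c = I ∨ A I c = true then ℓt c / o c else 0)) = ℓt c := by
    intro c
    have h1 : ∀ I, p I * (if c = I ∨ A I c = true then ℓt c / o c else 0)
        = (ℓt c / o c) * (if c = I ∨ A c I = true then p I else 0) := by
      intro I
      by_cases h : c = I ∨ A I c = true
      · have h' : c = I ∨ A c I = true := by
          rcases h with h | h
          · exact Or.inl h
          · exact Or.inr ((hsym I c) ▸ h)
        simp only [if_pos h, if_pos h']
        ring
      · have h' : ¬(c = I ∨ A c I = true) := by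
          intro hc
          refine h ?_
          rcases hc with hc | hc
          · exact Or.inl hc
          · exact Or.inr ((hsym c I) ▸ hc)
        simp [h, h']
    rw [Finset.sum_congr rfl (fun I _ => h1 I), ← Finset.mul_sum, ← hodef c,
      div_mul_cancel₀ _ (ho_pos c).ne']
  have hub2 : ∀ c : Fin N,
      (∑ I, p I * (if c = I ∨ A I c = true then (ℓt c / o c) ^ 2 else 0))
        = (ℓt c) ^ 2 / o c := by
    intro c
    have h1 : ∀ I, p I * (if c = I ∨ A I c = true then (ℓt c / o c) ^ 2 else 0)
        = ((ℓt c / o c) ^ 2) * (if c = I ∨ A c I = true then p I else 0) := by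
      intro I
      by_cases h : c = I ∨ A I c = true
      · have h' : c = I ∨ A c I = true := by
          rcases h with h | h
          · exact Or.inl h
          · exact Or.inr ((hsym I c) ▸ h)
        simp only [if_pos h, if_pos h']
        ring
      · have h' : ¬(c = I ∨ A c I = true) := by
          intro hc
          refine h ?_
          rcases hc with hc | hc
          · exact Or.inl hc
          · exact Or.inr ((hsym c I) ▸ hc)
        simp [h, h']
    rw [Finset.sum_congr rfl (fun I _ => h1 I), ← Finset.mul_sum, ← hodef c]
    have := ho_pos c
    field_simp
  -- per-I log bound
  have hkey : ∀ I : Fin N,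
      (1 / η) * Real.log (∑ j, Real.exp (-η * (Lhat j +
          (if j = I ∨ A I j = true then ℓt j / o j else 0))))
        ≤ (1 / η) * Real.log W
          - (∑ j, p j * (if j = I ∨ A I j = true then ℓt j / o j else 0))
          + (η / 2) * (∑ j, p j * (if j = I ∨ A I j = true then (ℓt j / o j) ^ 2 else 0)) := by
    intro I
    set x : Fin N → ℝ := fun j => if j = I ∨ A I j = true then ℓt j / o j else 0 with hxdef
    have hx0 : ∀ j, 0 ≤ x j := by
      intro j
      rw [hxdef]
      dsimp only
      split
      · exact div_nonneg (hℓ0 j) (ho_pos j).le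
      · exact le_rfl
    have hfac : (∑ j, Real.exp (-η * (Lhat j + x j))) = W * ∑ j, p j * Real.exp (-η * x j) := by
      rw [Finset.mul_sum]
      refine Finset.sum_congr rfl fun j _ => ?_
      rw [hpdef j]
      rw [neg_mul, neg_mul, neg_mul, mul_add, neg_add, Real.exp_add]
      field_simp
    have hqpos : (0:ℝ) < ∑ j, p j * Real.exp (-η * x j) :=
      Finset.sum_pos (fun j _ => mul_pos (hp j) (Real.exp_pos _)) ⟨k, Finset.mem_univ k⟩
    have hqle : (∑ j, p j * Real.exp (-η * x j))
        ≤ 1 - η * (∑ j, p j * x j) + η ^ 2 / 2 * (∑ j, p j * x j ^ 2) := by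
      have hterm : ∀ j, p j * Real.exp (-η * x j)
          ≤ p j - η * (p j * x j) + η ^ 2 / 2 * (p j * x j ^ 2) := by
        intro j
        have h1 : Real.exp (-(η * x j)) ≤ 1 - η * x j + (η * x j) ^ 2 / 2 :=
          exp_neg_le_quad (mul_nonneg hη.le (hx0 j))
        have h2 : p j * Real.exp (-(η * x j)) ≤ p j * (1 - η * x j + (η * x j) ^ 2 / 2) :=
          mul_le_mul_of_nonneg_left h1 (hp j).le
        rw [neg_mul]
        calc p j * Real.exp (-(η * x j)) ≤ p j * (1 - η * x j + (η * x j) ^ 2 / 2) := h2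
          _ = p j - η * (p j * x j) + η ^ 2 / 2 * (p j * x j ^ 2) := by ring
      calc (∑ j, p j * Real.exp (-η * x j))
          ≤ ∑ j, (p j - η * (p j * x j) + η ^ 2 / 2 * (p j * x j ^ 2)) :=
            Finset.sum_le_sum fun j _ => hterm j
        _ = (∑ j, p j) - η * (∑ j, p j * x j) + η ^ 2 / 2 * (∑ j, p j * x j ^ 2) := by
            rw [Finset.sum_add_distrib, Finset.sum_sub_distrib, ← Finset.mul_sum,
              ← Finset.mul_sum]
        _ = 1 - η * (∑ j, p j * x j) + η ^ 2 / 2 * (∑ j, p j * x j ^ 2) := by rw [hpsum]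
    have hlog : Real.log (∑ j, Real.exp (-η * (Lhat j + x j)))
        ≤ Real.log W - η * (∑ j, p j * x j) + η ^ 2 / 2 * (∑ j, p j * x j ^ 2) := by
      rw [hfac, Real.log_mul hW.ne' hqpos.ne']
      have h3 : Real.log (∑ j, p j * Real.exp (-η * x j))
          ≤ Real.log (1 - η * (∑ j, p j * x j) + η ^ 2 / 2 * (∑ j, p j * x j ^ 2)) :=
        Real.log_le_log hqpos hqle
      have h4 := Real.log_le_sub_one_of_pos (lt_of_lt_of_le hqpos hqle)
      linarith
    calc (1 / η) * Real.log (∑ j, Real.exp (-η * (Lhat j + x j)))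
        ≤ (1 / η) * (Real.log W - η * (∑ j, p j * x j) + η ^ 2 / 2 * (∑ j, p j * x j ^ 2)) :=
          mul_le_mul_of_nonneg_left hlog (by positivity)
      _ = (1 / η) * Real.log W - (∑ j, p j * x j) + (η / 2) * (∑ j, p j * x j ^ 2) := by
          field_simp
      _ = _ := by
          simp only [hxdef, apply_ite (fun y : ℝ => y ^ 2)]
          norm_num
  -- assemble
  have hstep : ∑ I, p I * (ℓt I +
        ((1 / η) * Real.log (∑ j, Real.exp (-η * (Lhat j +
            (if j = I ∨ A I j = true then ℓt j / o j else 0)))) +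
          (Lhat k + (if k = I ∨ A I k = true then ℓt k / o k else 0))))
      ≤ ∑ I, p I * (ℓt I +
        ((((1 / η) * Real.log W
            - (∑ j, p j * (if j = I ∨ A I j = true then ℓt j / o j else 0)))
          + (η / 2) * (∑ j, p j * (if j = I ∨ A I j = true then (ℓt j / o j) ^ 2 else 0)))
          + (Lhat k + (if k = I ∨ A I k = true then ℓt k / o k else 0)))) := by
    refine Finset.sum_le_sum fun I _ => ?_
    refine mul_le_mul_of_nonneg_left ?_ (hp I).le
    exact add_le_add_right (add_le_add_left (hkey I) _) _
  refine le_trans hstep ?_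
  have hexp : ∑ I, p I * (ℓt I +
        ((((1 / η) * Real.log W
            - (∑ j, p j * (if j = I ∨ A I j = true then ℓt j / o j else 0)))
          + (η / 2) * (∑ j, p j * (if j = I ∨ A I j = true then (ℓt j / o j) ^ 2 else 0)))
          + (Lhat k + (if k = I ∨ A I k = true then ℓt k / o k else 0))))
      = (∑ I, p I * ℓt I)
        + ((1 / η) * Real.log W + Lhat k) * (∑ I, p I)
        - (∑ I, p I * (∑ j, p j * (if j = I ∨ A I j = true then ℓt j / o j else 0)))
        + (η / 2) * (∑ I, p I * (∑ j, p j * (if j = I ∨ A I j = true then (ℓt j / o j) ^ 2 else 0)))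
        + (∑ I, p I * (if k = I ∨ A I k = true then ℓt k / o k else 0)) := by
    rw [Finset.sum_congr rfl (fun I _ => by
      show p I * _ = p I * ℓt I + ((1 / η) * Real.log W + Lhat k) * p I
        - p I * (∑ j, p j * (if j = I ∨ A I j = true then ℓt j / o j else 0))
        + (η / 2) * (p I * (∑ j, p j * (if j = I ∨ A I j = true then (ℓt j / o j) ^ 2 else 0)))
        + p I * (if k = I ∨ A I k = true then ℓt k / o k else 0)
      ring)]
    rw [Finset.sum_add_distrib, Finset.sum_add_distrib, Finset.sum_sub_distrib,
      Finset.sum_add_distrib, ← Finset.mul_sum, ← Finset.mul_sum]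
  rw [hexp]
  -- the double sums
  have hswap : ∀ (f : Fin N → Fin N → ℝ),
      (∑ I, p I * ∑ j, p j * f I j) = ∑ j, p j * ∑ I, p I * f I j := by
    intro f
    rw [Finset.sum_congr rfl (fun I _ => Finset.mul_sum _ _ _)]
    rw [Finset.sum_comm]
    refine Finset.sum_congr rfl fun j _ => ?_
    rw [Finset.mul_sum]
    exact Finset.sum_congr rfl fun I _ => by ring
  have hS1 : (∑ I, p I * (∑ j, p j * (if j = I ∨ A I j = true then ℓt j / o j else 0)))
      = ∑ I, p I * ℓt I := by
    rw [hswap]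
    exact Finset.sum_congr rfl fun j _ => by rw [hub j]
  have hS2 : (∑ I, p I * (∑ j, p j * (if j = I ∨ A I j = true then (ℓt j / o j) ^ 2 else 0)))
      = ∑ j, p j * (ℓt j ^ 2 / o j) := by
    rw [hswap]
    refine Finset.sum_congr rfl fun j _ => ?_
    rw [hub2 j]
  have hS2le : (∑ j, p j * (ℓt j ^ 2 / o j)) ≤ (independenceNumber N A : ℝ) := by
    have h1 : (∑ j, p j * (ℓt j ^ 2 / o j)) ≤ ∑ j, p j / o j := by
      refine Finset.sum_le_sum fun j _ => ?_
      have hsq : ℓt j ^ 2 ≤ 1 := by nlinarith [hℓ0 j, hℓ1 j]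
      have : p j * (ℓt j ^ 2 / o j) ≤ p j * (1 / o j) := by
        refine mul_le_mul_of_nonneg_left ?_ (hp j).le
        exact div_le_div_of_nonneg_right hsq (ho_pos j).le
      rwa [mul_one_div] at this
    refine h1.trans ?_
    have := ratio_le_indep A hsym p hp
    refine le_trans (le_of_eq ?_) this
    exact Finset.sum_congr rfl fun j _ => by rw [hodef j]
  rw [hS1, hS2, hub k, hpsum]
  have hfin : (η / 2) * (∑ j, p j * (ℓt j ^ 2 / o j))
      ≤ (η / 2) * (independenceNumber N A : ℝ) :=
    mul_le_mul_of_nonneg_left hS2le (by positivity)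
  linarith

lemma exp3_main {N : ℕ} {η : ℝ} (hη : 0 < η)
    (ℓ : ℕ → Fin N → ℝ) (hℓ : ∀ t i, ℓ t i ∈ Set.Icc (0:ℝ) 1)
    (Adj : ℕ → Fin N → Fin N → Bool) (hsym : ∀ t i j, Adj t i j = Adj t j i)
    (k : Fin N) :
    ∀ n t Lhat, exp3setExpectedLoss N η ℓ Adj n t Lhat
      ≤ (1 / η) * Real.log (∑ j, Real.exp (-η * Lhat j)) + Lhat k
        + ∑ s ∈ Finset.Ico t (t + n),
            (ℓ s k + (η / 2) * (independenceNumber N (Adj s) : ℝ)) := by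
  intro n
  induction n with
  | zero =>
    intro t Lhat
    rw [exp3setExpectedLoss]
    simp only [Nat.add_zero, Finset.Ico_self, Finset.sum_empty, add_zero]
    have hle : Real.exp (-η * Lhat k) ≤ ∑ j, Real.exp (-η * Lhat j) :=
      Finset.single_le_sum (f := fun j => Real.exp (-η * Lhat j))
        (fun j _ => (Real.exp_pos _).le) (Finset.mem_univ k)
    have hlog : -η * Lhat k ≤ Real.log (∑ j, Real.exp (-η * Lhat j)) := by
      have := Real.log_le_log (Real.exp_pos _) hle
      rwa [Real.log_exp] at this
    have h2 : (1 / η) * (-η * Lhat k) ≤ (1 / η) * Real.log (∑ j, Real.exp (-η * Lhat j)) :=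
      mul_le_mul_of_nonneg_left hlog (by positivity)
    have h3 : (1 / η) * (-η * Lhat k) = -Lhat k := by field_simp
    linarith
  | succ n ih =>
    intro t Lhat
    set W : ℝ := ∑ j, Real.exp (-η * Lhat j) with hWdef
    set p : Fin N → ℝ := fun i => Real.exp (-η * Lhat i) / W with hpdef
    set o : Fin N → ℝ := fun i => ∑ j, if i = j ∨ Adj t i j = true then p j else 0 with hodef
    have hunfold : exp3setExpectedLoss N η ℓ Adj (n + 1) t Lhat =
        ∑ I, p I * (ℓ t I +
          exp3setExpectedLoss N η ℓ Adj n (t + 1)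
            (fun i => Lhat i + if i = I ∨ Adj t I i = true then ℓ t i / o i else 0)) := by
      rw [exp3setExpectedLoss]
    rw [hunfold]
    have hW : 0 < W := by
      rw [hWdef]
      exact Finset.sum_pos (fun j _ => Real.exp_pos _) ⟨k, Finset.mem_univ k⟩
    have hp : ∀ i, 0 < p i := fun i => div_pos (Real.exp_pos _) hW
    have hpsum : (∑ i, p i) = 1 := by
      rw [hpdef]
      rw [← Finset.sum_div, div_self hW.ne']
    set C : ℝ := ∑ s ∈ Finset.Ico (t + 1) (t + 1 + n),
      (ℓ s k + (η / 2) * (independenceNumber N (Adj s) : ℝ)) with hCdef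
    calc ∑ I, p I * (ℓ t I +
          exp3setExpectedLoss N η ℓ Adj n (t + 1)
            (fun i => Lhat i + if i = I ∨ Adj t I i = true then ℓ t i / o i else 0))
        ≤ ∑ I, (p I * (ℓ t I +
            ((1 / η) * Real.log (∑ j, Real.exp (-η * (Lhat j +
                (if j = I ∨ Adj t I j = true then ℓ t j / o j else 0)))) +
              (Lhat k + (if k = I ∨ Adj t I k = true then ℓ t k / o k else 0))))
            + p I * C) := by
          refine Finset.sum_le_sum fun I _ => ?_
          have h : exp3setExpectedLoss N η ℓ Adj n (t + 1)
              (fun i => Lhat i + if i = I ∨ Adj t I i = true then ℓ t i / o i else 0)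
              ≤ (1 / η) * Real.log (∑ j, Real.exp (-η * (Lhat j +
                  (if j = I ∨ Adj t I j = true then ℓ t j / o j else 0))))
                + (Lhat k + (if k = I ∨ Adj t I k = true then ℓ t k / o k else 0)) + C :=
            ih (t + 1) (fun i => Lhat i + if i = I ∨ Adj t I i = true then ℓ t i / o i else 0)
          calc p I * (ℓ t I + exp3setExpectedLoss N η ℓ Adj n (t + 1)
                (fun i => Lhat i + if i = I ∨ Adj t I i = true then ℓ t i / o i else 0))
              ≤ p I * (ℓ t I +
                ((1 / η) * Real.log (∑ j, Real.exp (-η * (Lhat j +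
                    (if j = I ∨ Adj t I j = true then ℓ t j / o j else 0))))
                  + (Lhat k + (if k = I ∨ Adj t I k = true then ℓ t k / o k else 0)) + C)) :=
                mul_le_mul_of_nonneg_left (add_le_add_right h _) (hp I).le
            _ = p I * (ℓ t I +
                ((1 / η) * Real.log (∑ j, Real.exp (-η * (Lhat j +
                    (if j = I ∨ Adj t I j = true then ℓ t j / o j else 0)))) +
                  (Lhat k + (if k = I ∨ Adj t I k = true then ℓ t k / o k else 0))))
                + p I * C := by ring
      _ = (∑ I, p I * (ℓ t I +
            ((1 / η) * Real.log (∑ j, Real.exp (-η * (Lhat j +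
                (if j = I ∨ Adj t I j = true then ℓ t j / o j else 0)))) +
              (Lhat k + (if k = I ∨ Adj t I k = true then ℓ t k / o k else 0)))))
            + (∑ I, p I) * C := by
          rw [Finset.sum_add_distrib, Finset.sum_mul]
      _ ≤ ((1 / η) * Real.log W + Lhat k + ℓ t k
            + (η / 2) * (independenceNumber N (Adj t) : ℝ)) + 1 * C := by
          refine add_le_add ?_ (le_of_eq (by rw [hpsum]))
          exact round_core hη (Adj t) (hsym t) (ℓ t) (fun i => (hℓ t i).1) (fun i => (hℓ t i).2)
            Lhat W hWdef p o (fun i => rfl) (fun i => rfl) k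
      _ ≤ (1 / η) * Real.log W + Lhat k
          + ∑ s ∈ Finset.Ico t (t + (n + 1)),
              (ℓ s k + (η / 2) * (independenceNumber N (Adj s) : ℝ)) := by
          have hsum : ∑ s ∈ Finset.Ico t (t + (n + 1)),
              (ℓ s k + (η / 2) * (independenceNumber N (Adj s) : ℝ))
              = (ℓ t k + (η / 2) * (independenceNumber N (Adj t) : ℝ)) + C := by
            rw [hCdef]
            have h1 : t + (n + 1) = t + 1 + n := by omega
            rw [h1, Finset.sum_eq_sum_Ico_succ_bot (by omega)]
          rw [hsum]
          ring_nf
          exact le_refl _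

/-- **Regret of Exp3-SET (Alon et al.).**
Against an oblivious adversary choosing losses `ℓ_t ∈ [0,1]^N` and undirected
observation graphs `G_t` (every node observing its own loss), Exp3-SET run with
learning rate `η = √(2 log N / Σ_t α_t)`, where `α_t` is the independence number
of `G_t`, guarantees expected regret at most `√(2 (Σ_t α_t) log N)` against
every fixed action `k`. -/
theorem exp3set_regret (N T : ℕ) (hN : 1 ≤ N) (hT : 1 ≤ T)
    (ℓ : ℕ → Fin N → ℝ) (hℓ : ∀ t i, ℓ t i ∈ Set.Icc (0 : ℝ) 1)
    (Adj : ℕ → Fin N → Fin N → Bool)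
    (hsym : ∀ t i j, Adj t i j = Adj t j i)
    (η : ℝ)
    (hη : η = Real.sqrt (2 * Real.log N /
      ∑ t ∈ Finset.range T, (independenceNumber N (Adj t) : ℝ))) :
    ∀ k : Fin N,
      exp3setExpectedLoss N η ℓ Adj T 0 (fun _ => 0) -
          ∑ t ∈ Finset.range T, ℓ t k ≤
        Real.sqrt (2 * (∑ t ∈ Finset.range T, (independenceNumber N (Adj t) : ℝ)) *
          Real.log N) := by
  intro k
  rcases eq_or_lt_of_le hN with hN1 | hN2
  · -- N = 1
    subst hN1
    rw [exp3_one η ℓ Adj T 0 (fun _ => 0)]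
    have hk : k = 0 := Fin.eq_zero k
    rw [hk]
    have : (∑ s ∈ Finset.Ico 0 (0 + T), ℓ s 0) = ∑ t ∈ Finset.range T, ℓ t 0 := by
      rw [zero_add, Finset.range_eq_Ico]
    rw [this, sub_self]
    exact Real.sqrt_nonneg _
  · -- N ≥ 2
    have hN2' : 2 ≤ N := hN2
    set S : ℝ := ∑ t ∈ Finset.range T, (independenceNumber N (Adj t) : ℝ) with hSdef
    have hTS : (T : ℝ) ≤ S := by
      rw [hSdef]
      calc (T : ℝ) = ∑ t ∈ Finset.range T, (1 : ℝ) := by simp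
        _ ≤ ∑ t ∈ Finset.range T, (independenceNumber N (Adj t) : ℝ) :=
          Finset.sum_le_sum fun t _ => by
            exact_mod_cast one_le_indep (by omega) (Adj t)
    have hSpos : (0 : ℝ) < S := lt_of_lt_of_le (by exact_mod_cast hT) hTS
    have hlogN : 0 < Real.log N := Real.log_pos (by exact_mod_cast hN2')
    have hηpos : 0 < η := by
      rw [hη]
      exact Real.sqrt_pos.mpr (by positivity)
    have hη2 : η ^ 2 = 2 * Real.log N / S := by
      rw [hη]
      exact Real.sq_sqrt (by positivity)
    have hmain := exp3_main hηpos ℓ hℓ Adj hsym k T 0 (fun _ => 0)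
    have hW0 : (∑ j : Fin N, Real.exp (-η * (0:ℝ))) = (N : ℝ) := by
      simp
    rw [hW0] at hmain
    have hsplit : (∑ s ∈ Finset.Ico 0 (0 + T),
        (ℓ s k + (η / 2) * (independenceNumber N (Adj s) : ℝ)))
        = (∑ t ∈ Finset.range T, ℓ t k) + (η / 2) * S := by
      rw [zero_add, ← Finset.range_eq_Ico, Finset.sum_add_distrib, ← Finset.mul_sum, hSdef]
    rw [hsplit] at hmain
    have hbound : exp3setExpectedLoss N η ℓ Adj T 0 (fun _ => 0) -
        ∑ t ∈ Finset.range T, ℓ t k ≤ (1 / η) * Real.log N + (η / 2) * S := by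
      linarith
    refine hbound.trans ?_
    have hid : (1 / η) * Real.log N + (η / 2) * S = η * S := by
      have hη2' : η ^ 2 * S = 2 * Real.log N := by
        rw [hη2]
        field_simp
      field_simp
      nlinarith [hη2']
    have hsqrt : Real.sqrt (2 * S * Real.log N) = η * S := by
      rw [hη]
      rw [show 2 * S * Real.log N = (2 * Real.log N / S) * S ^ 2 by field_simp]
      rw [Real.sqrt_mul (by positivity), Real.sqrt_sq hSpos.le]
    rw [hsqrt, hid]
end

section
/- Optimality of the greedy algorithm on a polymatroid (Edmonds). Let M = (E, f) be a polymatroid on E = {1,…,L} and let w ∈ ℝ^L with w ≥ 0. Let e_1,…,e_L be an ordering of E with w(e_1) ≥ w(e_2) ≥ … ≥ w(e_L), and define x ∈ ℝ^L by x(e_i) = f({e_1,…,e_i}) − f({e_1,…,e_{i−1}}) for i = 1,…,L. Then x belongs to the base polyhedron B_M, and ⟨w, x⟩ = max_{y ∈ P_M} ⟨w, y⟩ = max_{y ∈ B_M} ⟨w, y⟩; in particular x is a maximum-weight basis of M. -/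
/-- Membership in the independence polyhedron `P_M` of a polymatroid with
rank function `f` on the ground set `Fin L`. -/
def memIndepPolyhedron {L : ℕ} (f : Finset (Fin L) → ℝ) (x : Fin L → ℝ) : Prop :=
  (∀ e, 0 ≤ x e) ∧ ∀ X : Finset (Fin L), ∑ e ∈ X, x e ≤ f X

/-- Membership in the base polyhedron `B_M` of a polymatroid with
rank function `f` on the ground set `Fin L`. -/
def memBasePolyhedron {L : ℕ} (f : Finset (Fin L) → ℝ) (x : Fin L → ℝ) : Prop :=
  memIndepPolyhedron f x ∧ ∑ e, x e = f Finset.univ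

/-- Abel-summation auxiliary lemma. -/
lemma greedy_abel_aux (c D : ℕ → ℝ) (hc0 : ∀ k, 0 ≤ c k)
    (hcmono : ∀ k, c (k+1) ≤ c k) (hD : ∀ k, 0 ≤ D k) (hD0 : D 0 = 0) :
    ∀ n, c n * D n ≤ ∑ k ∈ Finset.range n, c k * (D (k+1) - D k) := by
  intro n
  induction n with
  | zero => simp [hD0]
  | succ n ih =>
    rw [Finset.sum_range_succ]
    have h1 : c (n+1) * D (n+1) ≤ c n * D (n+1) :=
      mul_le_mul_of_nonneg_right (hcmono n) (hD _)
    nlinarith [ih]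

/-- **Optimality of the greedy algorithm on a polymatroid (Edmonds).**
If `w ≥ 0` and the items are ordered by nonincreasing weight via the permutation `σ`,
then the greedy vector `x`, with `x (σ i) = f({σ 0, …, σ i}) − f({σ 0, …, σ (i−1)})`,
belongs to the base polyhedron and maximizes `⟨w, ·⟩` over the whole independence
polyhedron (hence also over the base polyhedron). -/
theorem greedy_optimal_on_polymatroid (L : ℕ)
    (f : Finset (Fin L) → ℝ)
    (hf0 : f ∅ = 0)
    (hfnn : ∀ X, 0 ≤ f X)
    (hmono : ∀ X Y : Finset (Fin L), X ⊆ Y → f X ≤ f Y)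
    (hsub : ∀ X Y : Finset (Fin L), f (X ∪ Y) + f (X ∩ Y) ≤ f X + f Y)
    (w : Fin L → ℝ) (hw : ∀ e, 0 ≤ w e)
    (σ : Equiv.Perm (Fin L))
    (hσ : ∀ i j : Fin L, i ≤ j → w (σ j) ≤ w (σ i))
    (x : Fin L → ℝ)
    (hx : ∀ i : Fin L, x (σ i) =
      f ((Finset.univ.filter (fun j : Fin L => j ≤ i)).image σ)
        - f ((Finset.univ.filter (fun j : Fin L => j < i)).image σ)) :
    memBasePolyhedron f x ∧
      ∀ y : Fin L → ℝ, memIndepPolyhedron f y →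
        ∑ e, w e * y e ≤ ∑ e, w e * x e := by
  classical
  set P : ℕ → Finset (Fin L) :=
    fun n => (Finset.univ.filter (fun j : Fin L => (j : ℕ) < n)).image σ with hPdef
  have hmem : ∀ (i : Fin L) (n : ℕ), σ i ∈ P n ↔ (i : ℕ) < n := by
    intro i n
    simp [hPdef, σ.injective.eq_iff]
  have hP0 : P 0 = ∅ := by simp [hPdef]
  have hPuniv : ∀ n, L ≤ n → P n = Finset.univ := by
    intro n hn
    ext e
    simp only [Finset.mem_univ, iff_true]
    rcases σ.surjective e with ⟨i, rfl⟩
    exact (hmem i n).2 (lt_of_lt_of_le i.isLt hn)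
  have hPmono : ∀ m n : ℕ, m ≤ n → P m ⊆ P n := by
    intro m n hmn e he
    rcases σ.surjective e with ⟨i, rfl⟩
    rw [hmem] at he ⊢; omega
  have hstep : ∀ (k : ℕ) (h : k < L), P (k+1) = insert (σ ⟨k, h⟩) (P k) := by
    intro k h
    ext e
    rcases σ.surjective e with ⟨i, rfl⟩
    simp only [hmem, Finset.mem_insert, σ.injective.eq_iff, Fin.ext_iff]
    omega
  have hnotmem : ∀ (k : ℕ) (h : k < L), σ ⟨k, h⟩ ∉ P k := by
    intro k h hc
    rw [hmem] at hc
    exact absurd hc (by simp)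
  have hx' : ∀ i : Fin L, x (σ i) = f (P ((i : ℕ) + 1)) - f (P (i : ℕ)) := by
    intro i
    have h1 : (Finset.univ.filter (fun j : Fin L => j ≤ i)).image σ = P ((i : ℕ) + 1) := by
      simp only [hPdef]
      congr 1
      ext j
      simp only [Finset.mem_filter, Finset.mem_univ, true_and, Fin.le_def]
      omega
    have h2 : (Finset.univ.filter (fun j : Fin L => j < i)).image σ = P (i : ℕ) := by
      simp only [hPdef]
      congr 1
    rw [hx i, h1, h2]
  -- partial sums of x are exactly f (P n)
  have hXsum : ∀ n, ∑ e ∈ P n, x e = f (P n) := by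
    intro n
    induction n with
    | zero => simp [hP0, hf0]
    | succ n ih =>
      by_cases h : n < L
      · rw [hstep n h, Finset.sum_insert (hnotmem n h)]
        have hxn := hx' ⟨n, h⟩
        simp only at hxn
        rw [hxn, ih, ← hstep n h]
        ring
      · have h1 : P (n+1) = P n := by
          rw [hPuniv (n+1) (by omega), hPuniv n (by omega)]
        rw [h1, ih]
  have hPL : P L = Finset.univ := hPuniv L le_rfl
  -- x is nonnegative
  have hxnn : ∀ e, 0 ≤ x e := by
    intro e
    rcases σ.surjective e with ⟨i, rfl⟩
    rw [hx' i]
    have := hmono _ _ (hPmono (i : ℕ) ((i : ℕ) + 1) (Nat.le_succ _))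
    linarith
  -- x satisfies the independence constraints
  have hxindep : ∀ X : Finset (Fin L), ∑ e ∈ X, x e ≤ f X := by
    intro X
    have key : ∀ k ∈ Finset.range L,
        (fun k => if h : k < L then (if σ ⟨k, h⟩ ∈ X then x (σ ⟨k, h⟩) else 0) else 0) k
          ≤ f (P (k+1) ∩ X) - f (P k ∩ X) := by
      intro k hk
      rw [Finset.mem_range] at hk
      simp only [dif_pos hk]
      by_cases hX : σ ⟨k, hk⟩ ∈ X
      · rw [if_pos hX]
        have hsubset : P k ⊆ P (k+1) := hPmono k (k+1) (Nat.le_succ _)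
        have hu : P k ∪ (P (k+1) ∩ X) = P (k+1) := by
          apply subset_antisymm
          · exact Finset.union_subset hsubset Finset.inter_subset_left
          · intro e he
            rw [hstep k hk] at he
            rcases Finset.mem_insert.1 he with rfl | he'
            · exact Finset.mem_union_right _ (Finset.mem_inter.2 ⟨by rw [hstep k hk]; exact Finset.mem_insert_self _ _, hX⟩)
            · exact Finset.mem_union_left _ he'
        have hi : P k ∩ (P (k+1) ∩ X) = P k ∩ X := by
          rw [← Finset.inter_assoc, Finset.inter_eq_left.2 hsubset]
        have := hsub (P k) (P (k+1) ∩ X)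
        rw [hu, hi] at this
        have hxk := hx' ⟨k, hk⟩
        simp only at hxk
        rw [hxk]
        linarith
      · rw [if_neg hX]
        have h1 : P (k+1) ∩ X = P k ∩ X := by
          rw [hstep k hk, Finset.insert_inter_of_notMem hX]
        rw [h1]
        linarith
    calc ∑ e ∈ X, x e = ∑ e : Fin L, if e ∈ X then x e else 0 := by
          rw [Finset.sum_ite_mem, Finset.univ_inter]
      _ = ∑ i : Fin L, if σ i ∈ X then x (σ i) else 0 :=
          (Equiv.sum_comp σ (fun e => if e ∈ X then x e else 0)).symm
      _ = ∑ k ∈ Finset.range L,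
            (fun k => if h : k < L then (if σ ⟨k, h⟩ ∈ X then x (σ ⟨k, h⟩) else 0) else 0) k := by
          rw [← Fin.sum_univ_eq_sum_range]
          apply Finset.sum_congr rfl
          intro i _
          simp [i.isLt]
      _ ≤ ∑ k ∈ Finset.range L, (f (P (k+1) ∩ X) - f (P k ∩ X)) :=
          Finset.sum_le_sum key
      _ = f (P L ∩ X) - f (P 0 ∩ X) := Finset.sum_range_sub (fun k => f (P k ∩ X)) L
      _ = f X := by rw [hPL, hP0, Finset.univ_inter, Finset.empty_inter, hf0]; ring
  have hxbase : ∑ e, x e = f Finset.univ := by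
    rw [← hPL, ← hXsum L, hPL]
  refine ⟨⟨⟨hxnn, hxindep⟩, hxbase⟩, ?_⟩
  -- optimality
  intro y hy
  set c : ℕ → ℝ := fun k => if h : k < L then w (σ ⟨k, h⟩) else 0 with hcdef
  set D : ℕ → ℝ := fun n => f (P n) - ∑ e ∈ P n, y e with hDdef
  have hc0 : ∀ k, 0 ≤ c k := by
    intro k
    simp only [hcdef]
    split
    · exact hw _
    · exact le_refl 0
  have hcmono : ∀ k, c (k+1) ≤ c k := by
    intro k
    simp only [hcdef]
    split
    · rename_i h1
      rw [dif_pos (by omega : k < L)]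
      exact hσ ⟨k, by omega⟩ ⟨k+1, h1⟩ (by simp [Fin.le_def])
    · split
      · exact hw _
      · exact le_refl 0
  have hDnn : ∀ n, 0 ≤ D n := by
    intro n
    simp only [hDdef]
    have := hy.2 (P n)
    linarith
  have hD0 : D 0 = 0 := by simp [hDdef, hP0, hf0]
  have habel := greedy_abel_aux c D hc0 hcmono hDnn hD0 L
  have hcL : c L = 0 := by simp [hcdef]
  rw [hcL, zero_mul] at habel
  have hsum_eq : ∑ k ∈ Finset.range L, c k * (D (k+1) - D k)
      = ∑ e, w e * x e - ∑ e, w e * y e := by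
    have step : ∀ k ∈ Finset.range L,
        c k * (D (k+1) - D k)
          = (fun k => if h : k < L then w (σ ⟨k, h⟩) * (x (σ ⟨k, h⟩) - y (σ ⟨k, h⟩)) else 0) k := by
      intro k hk
      rw [Finset.mem_range] at hk
      simp only [hcdef, hDdef, dif_pos hk]
      have h1 : f (P (k+1)) - f (P k) = x (σ ⟨k, hk⟩) := by
        have := hx' ⟨k, hk⟩
        simp only at this
        rw [this]
      have h2 : ∑ e ∈ P (k+1), y e = y (σ ⟨k, hk⟩) + ∑ e ∈ P k, y e := by
        rw [hstep k hk, Finset.sum_insert (hnotmem k hk)]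
      rw [h2, ← h1]
      ring
    rw [Finset.sum_congr rfl step, ← Fin.sum_univ_eq_sum_range]
    have : ∀ i : Fin L,
        (fun k => if h : k < L then w (σ ⟨k, h⟩) * (x (σ ⟨k, h⟩) - y (σ ⟨k, h⟩)) else 0) (i : ℕ)
          = w (σ i) * (x (σ i) - y (σ i)) := by
      intro i
      simp [i.isLt]
    rw [Finset.sum_congr rfl (fun i _ => this i)]
    rw [Equiv.sum_comp σ (fun e => w e * (x e - y e))]
    simp [mul_sub, Finset.sum_sub_distrib]
  rw [hsum_eq] at habel
  linarith
end

section
/- Dual representation of ridge regression. Let Φ be a real n × d matrix, y ∈ ℝ^n, and γ > 0. Then the regularized least-squares loss 𝓛(θ) = γ·‖θ‖² + ‖y − Φθ‖² has a unique minimizer over ℝ^d, given by θ = Φᵀ·(ΦΦᵀ + γI_n)^{-1}·y; consequently, for every v ∈ ℝ^d the prediction ⟨v, θ⟩ equals (Φv)ᵀ·(ΦΦᵀ + γI_n)^{-1}·y, i.e., it can be computed purely from inner products (kernel evaluations) k = Φv and K = ΦΦᵀ as kᵀ(K + γI)^{-1}y. -/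
open Matrix

/-- **Dual representation of ridge regression.**  For a real `n × d` matrix `Φ`,
`y ∈ ℝ^n` and `γ > 0`, the regularized least-squares loss
`𝓛(θ) = γ‖θ‖² + ‖y − Φθ‖²` has a unique minimizer over `ℝ^d`, given by
`θ = Φᵀ(ΦΦᵀ + γI_n)⁻¹ y`; consequently every prediction `⟨v, θ⟩` equals
`(Φv)ᵀ(ΦΦᵀ + γI_n)⁻¹ y`, i.e., it can be computed purely from inner products. -/
theorem ridge_regression_dual (n d : ℕ) (Φ : Matrix (Fin n) (Fin d) ℝ)
    (y : Fin n → ℝ) (γ : ℝ) (hγ : 0 < γ) :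
    let Lss : (Fin d → ℝ) → ℝ := fun θ =>
      γ * (θ ⬝ᵥ θ) + (y - Φ.mulVec θ) ⬝ᵥ (y - Φ.mulVec θ)
    let θ₀ : Fin d → ℝ :=
      Φᵀ.mulVec (((Φ * Φᵀ + γ • (1 : Matrix (Fin n) (Fin n) ℝ))⁻¹).mulVec y)
    (∀ θ : Fin d → ℝ, Lss θ₀ ≤ Lss θ) ∧
    (∀ θ : Fin d → ℝ, (∀ θ' : Fin d → ℝ, Lss θ ≤ Lss θ') → θ = θ₀) ∧
    (∀ v : Fin d → ℝ, v ⬝ᵥ θ₀ =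
      (Φ.mulVec v) ⬝ᵥ ((Φ * Φᵀ + γ • (1 : Matrix (Fin n) (Fin n) ℝ))⁻¹).mulVec y) := by
  intro Lss θ₀
  set A : Matrix (Fin n) (Fin n) ℝ := Φ * Φᵀ + γ • 1 with hA
  have hT : ∀ (e : Fin d → ℝ) (u : Fin n → ℝ), e ⬝ᵥ Φᵀ.mulVec u = Φ.mulVec e ⬝ᵥ u := by
    intro e u
    rw [Matrix.dotProduct_mulVec, Matrix.vecMul_transpose]
  have hnn : ∀ x : Fin d → ℝ, 0 ≤ x ⬝ᵥ x := fun x =>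
    Finset.sum_nonneg fun i _ => mul_self_nonneg _
  have hnn' : ∀ x : Fin n → ℝ, 0 ≤ x ⬝ᵥ x := fun x =>
    Finset.sum_nonneg fun i _ => mul_self_nonneg _
  have h1 : (Φ * Φᵀ).PosSemidef := by
    simpa using Matrix.posSemidef_self_mul_conjTranspose Φ
  -- A is positive definite, hence invertible
  have hPD : A.PosDef := by
    refine Matrix.posDef_iff_dotProduct_mulVec.mpr ⟨h1.1.add ?_, fun x hx => ?_⟩
    · simp [Matrix.IsHermitian]
    · have hq := (Matrix.posSemidef_iff_dotProduct_mulVec.mp h1).2 x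
      have hxx : 0 < x ⬝ᵥ x := by
        rcases lt_or_eq_of_le (hnn' x) with h | h
        · exact h
        · exact absurd (dotProduct_self_eq_zero.mp h.symm) hx
      simp only [hA, Matrix.add_mulVec, dotProduct_add, Matrix.smul_mulVec,
        Matrix.one_mulVec, dotProduct_smul, star_trivial, smul_eq_mul] at *
      nlinarith
  have hdet : IsUnit A.det := isUnit_iff_ne_zero.mpr (ne_of_gt hPD.det_pos)
  have hInv : A * A⁻¹ = 1 := Matrix.mul_nonsing_inv A hdet
  set w : Fin n → ℝ := A⁻¹.mulVec y with hw
  have hAw : A.mulVec w = y := by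
    rw [hw, Matrix.mulVec_mulVec, hInv, Matrix.one_mulVec]
  -- normal equation
  have hθ₀ : θ₀ = Φᵀ.mulVec w := rfl
  have hstep : Φ.mulVec θ₀ + γ • w = y := by
    have h := hAw
    rw [hA, Matrix.add_mulVec, Matrix.smul_mulVec, Matrix.one_mulVec] at h
    rwa [hθ₀, Matrix.mulVec_mulVec]
  have hkey : Φᵀ.mulVec (Φ.mulVec θ₀) + γ • θ₀ = Φᵀ.mulVec y := by
    calc Φᵀ.mulVec (Φ.mulVec θ₀) + γ • θ₀
        = Φᵀ.mulVec (Φ.mulVec θ₀ + γ • w) := by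
          rw [Matrix.mulVec_add, Matrix.mulVec_smul, ← hθ₀]
      _ = Φᵀ.mulVec y := by rw [hstep]
  -- scalar form of the normal equation
  have hc : ∀ e : Fin d → ℝ,
      Φ.mulVec e ⬝ᵥ Φ.mulVec θ₀ + γ * (e ⬝ᵥ θ₀) = Φ.mulVec e ⬝ᵥ y := by
    intro e
    have h := congrArg (fun u => e ⬝ᵥ u) hkey
    simp only [dotProduct_add, dotProduct_smul, smul_eq_mul] at h
    rw [hT e (Φ.mulVec θ₀), hT e y] at h
    exact h
  -- decomposition of the loss
  have hdecomp : ∀ θ : Fin d → ℝ,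
      Lss θ = Lss θ₀ + γ * ((θ - θ₀) ⬝ᵥ (θ - θ₀))
        + Φ.mulVec (θ - θ₀) ⬝ᵥ Φ.mulVec (θ - θ₀) := by
    intro θ
    have hc' := hc (θ - θ₀)
    simp only [Lss, Matrix.mulVec_sub, sub_dotProduct, dotProduct_sub] at hc' ⊢
    rw [dotProduct_comm (Φ.mulVec θ) y, dotProduct_comm (Φ.mulVec θ₀) y,
      dotProduct_comm (Φ.mulVec θ₀) (Φ.mulVec θ), dotProduct_comm θ₀ θ] at *
    linarith [hc']
  refine ⟨fun θ => ?_, fun θ hθ => ?_, fun v => ?_⟩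
  · rw [hdecomp θ]
    nlinarith [hnn' (Φ.mulVec (θ - θ₀)), mul_nonneg hγ.le (hnn (θ - θ₀))]
  · have hle : Lss θ₀ ≤ Lss θ := by
      rw [hdecomp θ]
      nlinarith [hnn' (Φ.mulVec (θ - θ₀)), mul_nonneg hγ.le (hnn (θ - θ₀))]
    have heq : Lss θ = Lss θ₀ := le_antisymm (hθ θ₀) hle
    have h0 : (θ - θ₀) ⬝ᵥ (θ - θ₀) = 0 := by
      have hd := hdecomp θ
      rw [heq] at hd
      nlinarith [hnn (θ - θ₀), hnn' (Φ.mulVec (θ - θ₀))]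
    exact sub_eq_zero.mp (dotProduct_self_eq_zero.mp h0)
  · exact hT v w
end

section
/- Effective dimension lower-bounds the information gain. Let (λ_i)_{i≥1} be a nonincreasing summable sequence of nonnegative reals, let σ > 0, and let d ≥ 2 be an integer with λ_{d−1} > 0. Then Σ_{i≥1} log(1 + λ_i/σ²) ≥ log(1 + λ_{d−1}/σ²) · ( (d−1) + ( Σ_{i≥d} λ_i ) / λ_{d−1} ). -/
lemma log_concave_aux {x t : ℝ} (hx : 0 ≤ x) (ht0 : 0 ≤ t) (ht1 : t ≤ 1) :
    t * Real.log (1 + x) ≤ Real.log (1 + t * x) := by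
  have h := strictConcaveOn_log_Ioi.concaveOn.2
    (show (1 + x) ∈ Set.Ioi (0:ℝ) by simp; linarith)
    (show (1:ℝ) ∈ Set.Ioi (0:ℝ) by simp)
    ht0 (by linarith : 0 ≤ 1 - t) (by ring)
  simp only [smul_eq_mul, mul_one, Real.log_one] at h
  calc t * Real.log (1 + x) = t * Real.log (1 + x) + (1 - t) * 0 := by ring
    _ ≤ Real.log (t * (1 + x) + (1 - t)) := by simpa using h
    _ = Real.log (1 + t * x) := by ring_nf

/-- **Effective dimension lower-bounds the information gain.**
Let `(λ_i)_{i ≥ 1}` be a nonincreasing summable sequence of nonnegative reals,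
`σ > 0`, and `d ≥ 2` an integer with `λ_{d−1} > 0`.  Then
`Σ_{i ≥ 1} log(1 + λ_i/σ²) ≥ log(1 + λ_{d−1}/σ²) · ((d−1) + (Σ_{i ≥ d} λ_i)/λ_{d−1})`.
(The sequence is indexed so that `lam i` is `λ_i` for `i ≥ 1`.) -/
theorem effective_dimension_le_information_gain
    (lam : ℕ → ℝ) (σ : ℝ) (hσ : 0 < σ)
    (hnn : ∀ i, 1 ≤ i → 0 ≤ lam i)
    (hmono : ∀ i j, 1 ≤ i → i ≤ j → lam j ≤ lam i)
    (hsum : Summable fun i : ℕ => lam (i + 1))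
    (d : ℕ) (hd : 2 ≤ d) (hpos : 0 < lam (d - 1)) :
    Real.log (1 + lam (d - 1) / σ ^ 2) *
        (((d : ℝ) - 1) + (∑' i : ℕ, lam (i + d)) / lam (d - 1)) ≤
      ∑' i : ℕ, Real.log (1 + lam (i + 1) / σ ^ 2) := by
  have hσ2 : 0 < σ ^ 2 := by positivity
  set L := Real.log (1 + lam (d - 1) / σ ^ 2) with hL
  have hLnn : 0 ≤ L := Real.log_nonneg (by nlinarith [div_nonneg hpos.le hσ2.le])
  have hd1 : 1 ≤ d - 1 := by omega
  -- summability of the log series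
  have hf_nn : ∀ i : ℕ, 0 ≤ Real.log (1 + lam (i + 1) / σ ^ 2) := fun i =>
    Real.log_nonneg (by nlinarith [div_nonneg (hnn (i+1) (by omega)) hσ2.le])
  have hfsum : Summable fun i : ℕ => Real.log (1 + lam (i + 1) / σ ^ 2) := by
    apply Summable.of_nonneg_of_le hf_nn (fun i => ?_) (hsum.div_const (σ ^ 2))
    have h1 : 0 < 1 + lam (i + 1) / σ ^ 2 := by
      nlinarith [div_nonneg (hnn (i+1) (by omega)) hσ2.le]
    have := Real.log_le_sub_one_of_pos h1
    linarith
  -- split the sum at d-1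
  have hsplit := Summable.sum_add_tsum_nat_add (f := fun i => Real.log (1 + lam (i + 1) / σ ^ 2)) (d - 1) hfsum
  rw [← hsplit]
  have hidx : ∀ i : ℕ, i + (d - 1) + 1 = i + d := fun i => by omega
  -- bound head
  have hhead : L * ((d : ℝ) - 1) ≤
      ∑ i ∈ Finset.range (d - 1), Real.log (1 + lam (i + 1) / σ ^ 2) := by
    have : ∀ i ∈ Finset.range (d - 1), L ≤ Real.log (1 + lam (i + 1) / σ ^ 2) := by
      intro i hi
      simp only [Finset.mem_range] at hi
      apply Real.log_le_log (by nlinarith [div_nonneg hpos.le hσ2.le])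
      have hle : lam (d - 1) ≤ lam (i + 1) := hmono (i + 1) (d - 1) (by omega) (by omega)
      have h2 : lam (d - 1) / σ ^ 2 ≤ lam (i + 1) / σ ^ 2 := by gcongr
      linarith
    calc L * ((d : ℝ) - 1) = ∑ _i ∈ Finset.range (d - 1), L := by
          rw [Finset.sum_const, Finset.card_range, nsmul_eq_mul,
            Nat.cast_sub (by omega : 1 ≤ d)]; push_cast; ring
      _ ≤ _ := Finset.sum_le_sum this
  -- bound tail
  have htailsum : Summable fun i : ℕ => lam (i + d) :=
    ((summable_nat_add_iff (d - 1)).2 hsum).congr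
      (fun i => by rw [show i + (d - 1) + 1 = i + d from by omega])
  have htail : L * ((∑' i : ℕ, lam (i + d)) / lam (d - 1)) ≤
      ∑' i : ℕ, Real.log (1 + lam (i + (d - 1) + 1) / σ ^ 2) := by
    have key : ∀ i : ℕ, L / lam (d - 1) * lam (i + d) ≤
        Real.log (1 + lam (i + d) / σ ^ 2) := by
      intro i
      have ht0 : 0 ≤ lam (i + d) / lam (d - 1) :=
        div_nonneg (hnn (i + d) (by omega)) hpos.le
      have ht1 : lam (i + d) / lam (d - 1) ≤ 1 := by
        rw [div_le_one hpos]
        exact hmono (d - 1) (i + d) (by omega) (by omega)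
      have := log_concave_aux (x := lam (d - 1) / σ ^ 2) (t := lam (i + d) / lam (d - 1))
        (div_nonneg hpos.le hσ2.le) ht0 ht1
      have heq : lam (i + d) / lam (d - 1) * (lam (d - 1) / σ ^ 2) = lam (i + d) / σ ^ 2 := by
        field_simp
      rw [heq] at this
      calc L / lam (d - 1) * lam (i + d) = lam (i + d) / lam (d - 1) * L := by ring
        _ ≤ _ := this
    calc L * ((∑' i : ℕ, lam (i + d)) / lam (d - 1))
        = ∑' i : ℕ, L / lam (d - 1) * lam (i + d) := by
          rw [tsum_mul_left]; ring
      _ ≤ ∑' i : ℕ, Real.log (1 + lam (i + d) / σ ^ 2) := by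
          apply Summable.tsum_le_tsum key (htailsum.mul_left _)
          · apply Summable.of_nonneg_of_le (fun i => Real.log_nonneg
              (by nlinarith [div_nonneg (hnn (i+d) (by omega)) hσ2.le]))
              (fun i => ?_) (htailsum.div_const (σ ^ 2))
            have h1 : 0 < 1 + lam (i + d) / σ ^ 2 := by
              nlinarith [div_nonneg (hnn (i+d) (by omega)) hσ2.le]
            have := Real.log_le_sub_one_of_pos h1
            linarith
      _ = _ := by
          apply tsum_congr; intro i; rw [hidx]
  calc L * (((d : ℝ) - 1) + (∑' i : ℕ, lam (i + d)) / lam (d - 1))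
      = L * ((d : ℝ) - 1) + L * ((∑' i : ℕ, lam (i + d)) / lam (d - 1)) := by ring
    _ ≤ _ := add_le_add hhead htail
end

section
/- Optimism of the geometric-resampling loss estimates of FPL-IX. Let o ∈ (0,1], γ ∈ (0,1], and ℓ ≥ 0. Let X be geometric with parameter o, U geometric with parameter γ, and O a Bernoulli random variable with success probability o, with X, U, O mutually independent. Set K = min(X, U) and define the loss estimate ℓ̂ = K·O·ℓ. Then E[K] = 1/( o + (1−o)·γ ) and E[ℓ̂] = ℓ·o/( o + (1−o)·γ ) ≤ ℓ; that is, the estimate is optimistic: it lower-bounds the true loss in expectation. -/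
open MeasureTheory ProbabilityTheory

lemma count_lt_tsum (k : ℕ) : ∑' n : ℕ, (if n < k then (1 : ENNReal) else 0) = k := by
  rw [tsum_eq_sum (s := Finset.range k)
    (by intro b hb; simp only [Finset.mem_range] at hb; simp [hb])]
  rw [Finset.sum_congr rfl (fun b hb => if_pos (Finset.mem_range.1 hb))]
  simp

lemma geom_tail {Ω : Type} [MeasurableSpace Ω] (P : Measure Ω)
    (q : ℝ) (hq : q ∈ Set.Ioc (0 : ℝ) 1) (Y : Ω → ℕ) (hY : Measurable Y)
    (hlaw : ∀ k : ℕ, 1 ≤ k → P {ω | Y ω = k} = ENNReal.ofReal ((1 - q) ^ (k - 1) * q))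
    (n : ℕ) : P {ω | n < Y ω} = ENNReal.ofReal ((1 - q) ^ n) := by
  have hq0 : 0 ≤ 1 - q := by linarith [hq.2]
  have hq1 : 1 - q < 1 := by linarith [hq.1]
  have hset : {ω | n < Y ω} = ⋃ j : ℕ, {ω | Y ω = n + 1 + j} := by
    ext ω
    simp only [Set.mem_setOf_eq, Set.mem_iUnion]
    constructor
    · intro h; exact ⟨Y ω - (n + 1), by omega⟩
    · rintro ⟨j, hj⟩; omega
  have hdisj : Pairwise (Function.onFun Disjoint fun j : ℕ => {ω | Y ω = n + 1 + j}) := by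
    intro i j hij
    simp only [Function.onFun, Set.disjoint_left, Set.mem_setOf_eq]
    intro ω h1 h2; omega
  have hmeas : ∀ j : ℕ, MeasurableSet {ω | Y ω = n + 1 + j} := fun j =>
    hY (measurableSet_singleton _)
  rw [hset, measure_iUnion hdisj hmeas]
  have hterm : ∀ j : ℕ, P {ω | Y ω = n + 1 + j}
      = ENNReal.ofReal ((1 - q) ^ n * q * (1 - q) ^ j) := by
    intro j
    rw [hlaw (n + 1 + j) (by omega)]
    congr 1
    have h1 : n + 1 + j - 1 = n + j := by omega
    rw [h1, pow_add]; ring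
  simp_rw [hterm]
  have hnn : ∀ j : ℕ, 0 ≤ (1 - q) ^ n * q * (1 - q) ^ j := fun j => by
    have := hq.1.le; positivity
  have hsum : Summable (fun j : ℕ => (1 - q) ^ n * q * (1 - q) ^ j) :=
    (summable_geometric_of_lt_one hq0 hq1).mul_left _
  rw [← ENNReal.ofReal_tsum_of_nonneg hnn hsum, tsum_mul_left,
    tsum_geometric_of_lt_one hq0 hq1]
  congr 1
  have h2 : 1 - (1 - q) = q := by ring
  rw [h2, mul_assoc, mul_inv_cancel₀ (ne_of_gt hq.1), mul_one]

/-- **Optimism of the geometric-resampling loss estimates of FPL-IX.**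
Let `X` be geometric with parameter `o ∈ (0,1]`, `U` geometric with parameter
`γ ∈ (0,1]`, and `O` Bernoulli with success probability `o`, mutually
independent, and let `ℓ ≥ 0`.  With `K = min(X, U)` and the loss estimate
`ℓ̂ = K·O·ℓ`, one has `E[K] = 1/(o + (1−o)γ)` and
`E[ℓ̂] = ℓ·o/(o + (1−o)γ) ≤ ℓ`: the estimate lower-bounds the true loss in
expectation. -/
theorem fplix_estimates_optimistic
    (Ω : Type) [MeasurableSpace Ω] (P : Measure Ω) [IsProbabilityMeasure P]
    (o γ ℓ : ℝ) (ho : o ∈ Set.Ioc (0 : ℝ) 1) (hγ : γ ∈ Set.Ioc (0 : ℝ) 1) (hℓ : 0 ≤ ℓ)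
    (X U O : Ω → ℕ) (hX : Measurable X) (hU : Measurable U) (hO : Measurable O)
    (hindep : iIndepFun ![X, U, O] P)
    (hXlaw : ∀ k : ℕ, 1 ≤ k → P {ω | X ω = k} = ENNReal.ofReal ((1 - o) ^ (k - 1) * o))
    (hUlaw : ∀ k : ℕ, 1 ≤ k → P {ω | U ω = k} = ENNReal.ofReal ((1 - γ) ^ (k - 1) * γ))
    (hO1 : P {ω | O ω = 1} = ENNReal.ofReal o)
    (hO0 : P {ω | O ω = 0} = ENNReal.ofReal (1 - o)) :
    (∫ ω, (min (X ω) (U ω) : ℝ) ∂P = 1 / (o + (1 - o) * γ)) ∧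
    (∫ ω, (min (X ω) (U ω) : ℝ) * (O ω : ℝ) * ℓ ∂P = ℓ * o / (o + (1 - o) * γ)) ∧
    ℓ * o / (o + (1 - o) * γ) ≤ ℓ := by
  obtain ⟨ho0, ho1⟩ := ho
  obtain ⟨hγ0, hγ1⟩ := hγ
  set r : ℝ := (1 - o) * (1 - γ) with hr
  have hr0 : 0 ≤ r := mul_nonneg (by linarith) (by linarith)
  have hr1 : r < 1 := by nlinarith
  have hden_eq : 1 - r = o + (1 - o) * γ := by rw [hr]; ring
  have hden : 0 < o + (1 - o) * γ := by linarith
  set K : Ω → ℕ := fun ω => min (X ω) (U ω) with hK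
  have hKmeas : Measurable K := hX.min hU
  -- independence of X and U
  have hXU : IndepFun X U P := by
    have h := hindep.indepFun (i := 0) (j := 1) (by decide)
    simpa using h
  -- tail probabilities
  have hXtail := geom_tail P o ⟨ho0, ho1⟩ X hX hXlaw
  have hUtail := geom_tail P γ ⟨hγ0, hγ1⟩ U hU hUlaw
  have hKset : ∀ n : ℕ, {ω | n < K ω} = X ⁻¹' Set.Ioi n ∩ U ⁻¹' Set.Ioi n := by
    intro n; ext ω; simp [hK, lt_min_iff]
  have hKtail : ∀ n : ℕ, P {ω | n < K ω} = ENNReal.ofReal (r ^ n) := by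
    intro n
    rw [hKset n, hXU.measure_inter_preimage_eq_mul _ _ measurableSet_Ioi measurableSet_Ioi]
    have hx : X ⁻¹' Set.Ioi n = {ω | n < X ω} := rfl
    have hu : U ⁻¹' Set.Ioi n = {ω | n < U ω} := rfl
    rw [hx, hu, hXtail n, hUtail n, ← ENNReal.ofReal_mul (pow_nonneg (by linarith) n)]
    rw [hr, mul_pow]
  have hKsetMeas : ∀ n : ℕ, MeasurableSet {ω | n < K ω} := fun n =>
    hKmeas measurableSet_Ioi
  -- lintegral of K
  have hpt : ∀ ω, (K ω : ENNReal)
      = ∑' n : ℕ, Set.indicator {ω' | n < K ω'} (1 : Ω → ENNReal) ω := by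
    intro ω
    rw [eq_comm]
    simp only [Set.indicator_apply, Set.mem_setOf_eq, Pi.one_apply]
    exact count_lt_tsum (K ω)
  have hKlint : ∫⁻ ω, (K ω : ENNReal) ∂P = (1 - ENNReal.ofReal r)⁻¹ := by
    calc ∫⁻ ω, (K ω : ENNReal) ∂P
        = ∫⁻ ω, ∑' n : ℕ, Set.indicator {ω' | n < K ω'} (1 : Ω → ENNReal) ω ∂P :=
          lintegral_congr hpt
      _ = ∑' n : ℕ, ∫⁻ ω, Set.indicator {ω' | n < K ω'} (1 : Ω → ENNReal) ω ∂P :=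
          lintegral_tsum (fun n => (measurable_one.indicator (hKsetMeas n)).aemeasurable)
      _ = ∑' n : ℕ, P {ω | n < K ω} := by
          refine tsum_congr fun n => ?_
          rw [lintegral_indicator_one (hKsetMeas n)]
      _ = ∑' n : ℕ, (ENNReal.ofReal r) ^ n := by
          refine tsum_congr fun n => ?_; rw [hKtail n, ENNReal.ofReal_pow hr0]
      _ = (1 - ENNReal.ofReal r)⁻¹ := ENNReal.tsum_geometric _
  have h1r : (1 : ENNReal) - ENNReal.ofReal r = ENNReal.ofReal (1 - r) := by
    rw [ENNReal.ofReal_sub _ hr0, ENNReal.ofReal_one]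
  -- first integral
  have hXr : Measurable fun ω => (X ω : ℝ) := measurable_from_nat.comp hX
  have hUr : Measurable fun ω => (U ω : ℝ) := measurable_from_nat.comp hU
  have hOr : Measurable fun ω => (O ω : ℝ) := measurable_from_nat.comp hO
  have hint1 : ∫ ω, (min (X ω) (U ω) : ℝ) ∂P = 1 / (o + (1 - o) * γ) := by
    rw [integral_eq_lintegral_of_nonneg_ae
      (ae_of_all _ fun ω => le_min (Nat.cast_nonneg _) (Nat.cast_nonneg _))
      ((hXr.min hUr).aestronglyMeasurable)]
    have hcast : ∀ ω, ENNReal.ofReal (min (X ω : ℝ) (U ω : ℝ)) = (K ω : ENNReal) := by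
      intro ω
      rw [← Nat.cast_min, ENNReal.ofReal_natCast]
    simp_rw [hcast]
    rw [hKlint, h1r, ← ENNReal.ofReal_inv_of_pos (by linarith),
      ENNReal.toReal_ofReal (inv_nonneg.mpr (by linarith)), hden_eq, one_div]
  refine ⟨hint1, ?_, ?_⟩
  · -- second integral
    have hprodO : IndepFun (fun ω => (X ω, U ω)) O P := by
      have h := hindep.indepFun_prodMk
        (fun i => by fin_cases i <;> simpa using (by first | exact hX | exact hU | exact hO))
        0 1 2 (by decide) (by decide)
      simpa using h
    have hOae : ∀ᵐ ω ∂P, O ω = 0 ∨ O ω = 1 := by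
      have hd : Disjoint {ω | O ω = 0} {ω | O ω = 1} := by
        simp only [Set.disjoint_left, Set.mem_setOf_eq]
        intro ω h0 h1; omega
      have hms1 : MeasurableSet {ω | O ω = 1} := hO (measurableSet_singleton 1)
      have hms0 : MeasurableSet {ω | O ω = 0} := hO (measurableSet_singleton 0)
      have huniv : P ({ω | O ω = 0} ∪ {ω | O ω = 1}) = 1 := by
        rw [measure_union hd hms1, hO0, hO1, ← ENNReal.ofReal_add (by linarith) ho0.le]
        norm_num
      have hcompl : P ({ω | O ω = 0} ∪ {ω | O ω = 1})ᶜ = 0 := by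
        rw [measure_compl (hms0.union hms1) (measure_ne_top _ _), huniv]
        simp
      rw [ae_iff]
      have hseteq : {a | ¬(O a = 0 ∨ O a = 1)} = ({ω | O ω = 0} ∪ {ω | O ω = 1})ᶜ := by
        ext ω; simp [not_or]
      rw [hseteq]; exact hcompl
    have hKOms : ∀ n : ℕ, MeasurableSet ({ω | n < K ω} ∩ {ω | O ω = 1}) :=
      fun n => (hKsetMeas n).inter (hO (measurableSet_singleton 1))
    have hinter : ∀ n : ℕ, P ({ω | n < K ω} ∩ {ω | O ω = 1})
        = ENNReal.ofReal (r ^ n) * ENNReal.ofReal o := by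
      intro n
      have hs1 : {ω | n < K ω} = (fun ω => (X ω, U ω)) ⁻¹' (Set.Ioi n ×ˢ Set.Ioi n) := by
        ext ω; simp [hK, lt_min_iff]
      have hs2 : {ω | O ω = 1} = O ⁻¹' {1} := rfl
      rw [hs1, hs2, hprodO.measure_inter_preimage_eq_mul _ _
        (measurableSet_Ioi.prod measurableSet_Ioi) (measurableSet_singleton 1)]
      rw [← hs1, ← hs2, hKtail n, hO1]
    have hKOlint : ∫⁻ ω, (K ω : ENNReal) * (O ω : ENNReal) ∂P
        = (1 - ENNReal.ofReal r)⁻¹ * ENNReal.ofReal o := by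
      have hptw : ∀ᵐ ω ∂P, (K ω : ENNReal) * (O ω : ENNReal)
          = ∑' n : ℕ, Set.indicator ({ω' | n < K ω'} ∩ {ω' | O ω' = 1})
              (1 : Ω → ENNReal) ω := by
        filter_upwards [hOae] with ω hω
        rcases hω with h0 | h1
        · simp [Set.indicator_apply, Set.mem_inter_iff, Set.mem_setOf_eq, h0]
        · simp only [Set.indicator_apply, Set.mem_inter_iff, Set.mem_setOf_eq, h1,
            and_true, Nat.cast_one, mul_one, Pi.one_apply]
          exact (count_lt_tsum (K ω)).symm
      rw [lintegral_congr_ae hptw,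
        lintegral_tsum (fun n => (measurable_one.indicator (hKOms n)).aemeasurable)]
      calc (∑' n : ℕ, ∫⁻ ω, Set.indicator ({ω' | n < K ω'} ∩ {ω' | O ω' = 1})
              (1 : Ω → ENNReal) ω ∂P)
          = ∑' n : ℕ, P ({ω | n < K ω} ∩ {ω | O ω = 1}) := by
            refine tsum_congr fun n => ?_
            rw [lintegral_indicator_one (hKOms n)]
        _ = ∑' n : ℕ, (ENNReal.ofReal r) ^ n * ENNReal.ofReal o := by
            refine tsum_congr fun n => ?_; rw [hinter n, ENNReal.ofReal_pow hr0]
        _ = (1 - ENNReal.ofReal r)⁻¹ * ENNReal.ofReal o := by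
            rw [ENNReal.tsum_mul_right, ENNReal.tsum_geometric]
    have h2 : ∫ ω, min (X ω : ℝ) (U ω : ℝ) * (O ω : ℝ) ∂P = (o + (1 - o) * γ)⁻¹ * o := by
      rw [integral_eq_lintegral_of_nonneg_ae
        (ae_of_all _ fun ω => mul_nonneg
          (le_min (Nat.cast_nonneg _) (Nat.cast_nonneg _)) (Nat.cast_nonneg _))
        (((hXr.min hUr).mul hOr).aestronglyMeasurable)]
      have heq : ∀ ω, ENNReal.ofReal (min (X ω : ℝ) (U ω : ℝ) * (O ω : ℝ))
          = (K ω : ENNReal) * (O ω : ENNReal) := by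
        intro ω
        rw [← Nat.cast_min, ← Nat.cast_mul, ENNReal.ofReal_natCast, Nat.cast_mul]
      simp_rw [heq]
      rw [hKOlint, h1r, ← ENNReal.ofReal_inv_of_pos (by linarith),
        ← ENNReal.ofReal_mul (inv_nonneg.mpr (by linarith : (0:ℝ) ≤ 1 - r)), hden_eq,
        ENNReal.toReal_ofReal (mul_nonneg (inv_nonneg.mpr hden.le) ho0.le)]
    calc ∫ ω, (min (X ω) (U ω) : ℝ) * (O ω : ℝ) * ℓ ∂P
        = (∫ ω, min (X ω : ℝ) (U ω : ℝ) * (O ω : ℝ) ∂P) * ℓ := integral_mul_const ℓ _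
      _ = ℓ * o / (o + (1 - o) * γ) := by rw [h2]; field_simp
  · -- the bound
    rw [div_le_iff₀ hden]
    nlinarith [mul_nonneg (mul_nonneg hℓ (by linarith : (0:ℝ) ≤ 1 - o)) hγ0.le]
end

section
/- Optimism of the Exp3-WIX loss estimates. Fix N ≥ 1, a matrix of observation weights s ∈ [0,1]^{N×N}, a node index i, a loss ℓ_i ≥ 0, a probability vector p over [N], and γ > 0. Let I be a random node drawn according to p and let ξ_i be a random variable independent of I with E[ξ_i] = 0. The learner receives the noisy observation c_i = s_{I,i}·ℓ_i + (1 − s_{I,i})·ξ_i and forms the estimate ℓ̂_i = s_{I,i}·c_i / ( Σ_{j=1}^N p_j·s_{j,i}² + γ ). Then E[ℓ̂_i] = ( Σ_{j=1}^N p_j·s_{j,i}² )·ℓ_i / ( Σ_{j=1}^N p_j·s_{j,i}² + γ ) ≤ ℓ_i; that is, the estimate is optimistic: it lower-bounds the true loss in expectation. -/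
open MeasureTheory ProbabilityTheory

/-- **Optimism of the Exp3-WIX loss estimates.**
The learner draws `I ∼ p`, receives the noisy observation
`c_i = s_{I,i} ℓ_i + (1 − s_{I,i}) ξ_i` (with zero-mean noise `ξ_i`
independent of `I`) and forms the estimate
`ℓ̂_i = s_{I,i} c_i / (Σ_j p_j s_{j,i}² + γ)`.  Then
`E[ℓ̂_i] = (Σ_j p_j s_{j,i}²) ℓ_i / (Σ_j p_j s_{j,i}² + γ) ≤ ℓ_i`:
the estimate lower-bounds the true loss in expectation. -/
theorem wix_estimates_optimistic
    (N : ℕ) (hN : 1 ≤ N)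
    (s : Fin N → Fin N → ℝ) (hs : ∀ j i, s j i ∈ Set.Icc (0 : ℝ) 1)
    (i : Fin N) (ℓi : ℝ) (hℓ : 0 ≤ ℓi)
    (p : Fin N → ℝ) (hp : ∀ j, 0 ≤ p j) (hp1 : ∑ j, p j = 1)
    (γ : ℝ) (hγ : 0 < γ)
    (Ω : Type) [MeasurableSpace Ω] (P : Measure Ω) [IsProbabilityMeasure P]
    (I : Ω → Fin N) (hI : Measurable I)
    (hIlaw : ∀ j : Fin N, P {ω | I ω = j} = ENNReal.ofReal (p j))
    (ξ : Ω → ℝ) (hξmeas : Measurable ξ) (hξint : Integrable ξ P)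
    (hξ0 : ∫ ω, ξ ω ∂P = 0)
    (hindep : IndepFun I ξ P) :
    (∫ ω, s (I ω) i * (s (I ω) i * ℓi + (1 - s (I ω) i) * ξ ω) /
        ((∑ j, p j * (s j i) ^ 2) + γ) ∂P =
      (∑ j, p j * (s j i) ^ 2) * ℓi / ((∑ j, p j * (s j i) ^ 2) + γ)) ∧
    (∑ j, p j * (s j i) ^ 2) * ℓi / ((∑ j, p j * (s j i) ^ 2) + γ) ≤ ℓi := by
  have hA : 0 ≤ ∑ j, p j * (s j i) ^ 2 :=
    Finset.sum_nonneg fun j _ => mul_nonneg (hp j) (sq_nonneg _)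
  have hDpos : 0 < (∑ j, p j * (s j i) ^ 2) + γ := by linarith
  set f : Fin N → ℝ := fun j => (s j i) ^ 2 * ℓi with hf
  set g : Fin N → ℝ := fun j => s j i * (1 - s j i) with hg
  have hfm : Measurable f := measurable_of_countable f
  have hgm : Measurable g := measurable_of_countable g
  -- integrability of f ∘ I
  have hfint : Integrable (fun ω => f (I ω)) P := by
    refine Integrable.bdd_mul (integrable_const 1) ((hfm.comp hI).aestronglyMeasurable)
      (c := ℓi) (Filter.Eventually.of_forall fun ω => ?_) |>.congr (Filter.Eventually.of_forall fun ω => by simp)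
    have h1 := (hs (I ω) i).1
    have h2 := (hs (I ω) i).2
    simp only [Function.comp, hf, Real.norm_eq_abs,
      abs_of_nonneg (mul_nonneg (sq_nonneg _) hℓ)]
    nlinarith [mul_nonneg (mul_nonneg (sub_nonneg.mpr h2)
      (by linarith : (0:ℝ) ≤ 1 + s (I ω) i)) hℓ]
  -- integrability of (g ∘ I) * ξ
  have hgξint : Integrable (fun ω => g (I ω) * ξ ω) P := by
    refine hξint.bdd_mul ((hgm.comp hI).aestronglyMeasurable) (c := 1) (Filter.Eventually.of_forall fun ω => ?_)
    have h1 := (hs (I ω) i).1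
    have h2 := (hs (I ω) i).2
    simp only [hg, Real.norm_eq_abs]
    rw [abs_le]
    constructor <;> nlinarith
  -- expectation of f ∘ I
  have hmapI : ∀ (h : Fin N → ℝ), ∫ ω, h (I ω) ∂P = ∑ j, p j * h j := by
    intro h
    have hmeas : Measurable h := measurable_of_countable h
    have : IsProbabilityMeasure (P.map I) := Measure.isProbabilityMeasure_map hI.aemeasurable
    rw [← integral_map hI.aemeasurable hmeas.aestronglyMeasurable,
      integral_fintype .of_finite]
    refine Finset.sum_congr rfl fun j _ => ?_
    rw [measureReal_def, Measure.map_apply hI (measurableSet_singleton j)]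
    have : I ⁻¹' {j} = {ω | I ω = j} := rfl
    rw [this, hIlaw j, smul_eq_mul, ENNReal.toReal_ofReal (hp j)]
  -- expectation of (g ∘ I) * ξ is zero
  have hzero : ∫ ω, g (I ω) * ξ ω ∂P = 0 := by
    have hind2 : IndepFun (fun ω => g (I ω)) ξ P :=
      hindep.comp hgm measurable_id
    rw [show (fun ω => g (I ω) * ξ ω) = (fun ω => g (I ω)) * ξ from rfl]
    rw [hind2.integral_mul_eq_mul_integral ((hgm.comp hI).aestronglyMeasurable) hξmeas.aestronglyMeasurable,
      hξ0, mul_zero]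
  have key : ∫ ω, (f (I ω) + g (I ω) * ξ ω) ∂P = (∑ j, p j * (s j i) ^ 2) * ℓi := by
    rw [integral_add hfint hgξint, hmapI f, hzero, add_zero, hf, Finset.sum_mul]
    exact Finset.sum_congr rfl fun j _ => by ring
  constructor
  · have : (fun ω => s (I ω) i * (s (I ω) i * ℓi + (1 - s (I ω) i) * ξ ω) /
        ((∑ j, p j * (s j i) ^ 2) + γ)) =
      fun ω => (f (I ω) + g (I ω) * ξ ω) / ((∑ j, p j * (s j i) ^ 2) + γ) := by
      funext ω; simp only [hf, hg]; ring
    rw [this, integral_div, key]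
  · rw [div_le_iff₀ hDpos]
    nlinarith
end

section
/- Probability-ratio sum bounded by the independence number. Let G be an undirected graph on a finite vertex set V with independence number α(G), and let p : V → ℝ≥0 satisfy Σ_{v∈V} p_v = 1. Then Σ_{v∈V} p_v / ( p_v + Σ_{u : u∼v} p_u ) ≤ α(G), where u∼v denotes adjacency in G (so the denominator is the total probability of the closed neighborhood of v), and any term whose denominator vanishes is interpreted as 0 (its numerator then also vanishes). -/
open Finset

private lemma key_lemma (V : Type) [Fintype V] [DecidableEq V] (G : SimpleGraph V)
    [DecidableRel G.Adj] (p : V → ℝ) (hp : ∀ v, 0 ≤ p v) :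
    ∀ S : Finset V, ∃ T : Finset V, T ⊆ S ∧ (∀ a ∈ T, ∀ b ∈ T, ¬ G.Adj a b) ∧
      ∑ v ∈ S, p v / (∑ u ∈ S.filter (fun u => u = v ∨ G.Adj v u), p u) ≤ (T.card : ℝ) := by
  intro S
  induction S using Finset.strongInduction with
  | _ S ih =>
  set D : Finset V → V → ℝ := fun S v => ∑ u ∈ S.filter (fun u => u = v ∨ G.Adj v u), p u
    with hD
  have hDnonneg : ∀ (A : Finset V) v, 0 ≤ D A v := fun A v =>
    Finset.sum_nonneg (fun u _ => hp u)
  have hple : ∀ (A : Finset V), ∀ v ∈ A, p v ≤ D A v := by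
    intro A v hv
    exact Finset.single_le_sum (fun u _ => hp u) (by simp [hv])
  by_cases h : ∃ v ∈ S, 0 < D S v
  · -- pick minimizer of D S over positive-denominator vertices
    obtain ⟨v₀, hv₀⟩ := h
    obtain ⟨w, hw, hwmin⟩ := Finset.exists_min_image (S.filter (fun v => 0 < D S v)) (D S)
      ⟨v₀, by simp [hv₀.1, hv₀.2]⟩
    rw [Finset.mem_filter] at hw
    obtain ⟨hwS, hwpos⟩ := hw
    set N : Finset V := S.filter (fun u => u = w ∨ G.Adj w u) with hN
    have hwN : w ∈ N := by simp [hN, hwS]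
    set S' : Finset V := S \ N with hS'
    have hS'sub : S' ⊆ S := Finset.sdiff_subset
    have hS'ss : S' ⊂ S := Finset.ssubset_iff_of_subset hS'sub |>.2 ⟨w, hwS, by simp [hS', hwN]⟩
    obtain ⟨T', hT'sub, hT'ind, hT'sum⟩ := ih S' hS'ss
    have hwT' : w ∉ T' := fun hc => by
      have := hT'sub hc; rw [hS', Finset.mem_sdiff] at this; exact this.2 hwN
    refine ⟨insert w T', ?_, ?_, ?_⟩
    · intro a ha
      rcases Finset.mem_insert.1 ha with rfl | ha
      · exact hwS
      · exact hS'sub (hT'sub ha)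
    · -- independence
      have hnoadj : ∀ b ∈ T', ¬ G.Adj w b := by
        intro b hb hadj
        have hbS' := hT'sub hb
        rw [hS', Finset.mem_sdiff] at hbS'
        exact hbS'.2 (Finset.mem_filter.2 ⟨hbS'.1, Or.inr hadj⟩)
      intro a ha b hb hadj
      rcases Finset.mem_insert.1 ha with ha' | ha'
      · rcases Finset.mem_insert.1 hb with hb' | hb'
        · rw [ha', hb'] at hadj; exact G.irrefl hadj
        · rw [ha'] at hadj; exact hnoadj b hb' hadj
      · rcases Finset.mem_insert.1 hb with hb' | hb'
        · rw [hb'] at hadj; exact hnoadj a ha' hadj.symm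
        · exact hT'ind a ha' b hb' hadj
    · -- the sum bound
      have hsplit : S = N ∪ S' := by
        rw [hS', Finset.union_sdiff_of_subset (Finset.filter_subset _ _)]
      have hdisj : Disjoint N S' := Finset.disjoint_sdiff
      have hsum : ∑ v ∈ S, p v / D S v = (∑ u ∈ N, p u / D S u) + ∑ v ∈ S', p v / D S v := by
        rw [← Finset.sum_union hdisj, ← hsplit]
      have h1 : ∑ u ∈ N, p u / D S u ≤ 1 := by
        have hterm : ∀ u ∈ N, p u / D S u ≤ p u / D S w := by
          intro u hu
          have huS : u ∈ S := Finset.mem_of_mem_filter u hu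
          rcases lt_or_ge 0 (D S u) with hpos | hle
          · have hmin := hwmin u (by simp [huS, hpos])
            exact div_le_div_of_nonneg_left (hp u) hwpos hmin |>.trans_eq rfl
          · have hDu : D S u = 0 := le_antisymm hle (hDnonneg S u)
            have hpu : p u = 0 := le_antisymm (hDu ▸ hple S u huS) (hp u)
            simp [hpu]
        calc ∑ u ∈ N, p u / D S u ≤ ∑ u ∈ N, p u / D S w := Finset.sum_le_sum hterm
          _ = (∑ u ∈ N, p u) / D S w := by rw [Finset.sum_div]
          _ = D S w / D S w := rfl
          _ = 1 := div_self (ne_of_gt hwpos)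
      have h2 : ∑ v ∈ S', p v / D S v ≤ ∑ v ∈ S', p v / D S' v := by
        refine Finset.sum_le_sum ?_
        intro v hv
        have hvS : v ∈ S := hS'sub hv
        have hDle : D S' v ≤ D S v := by
          refine Finset.sum_le_sum_of_subset_of_nonneg ?_ (fun u _ _ => hp u)
          exact Finset.filter_subset_filter _ hS'sub
        rcases lt_or_ge 0 (D S' v) with hpos | hle
        · exact div_le_div_of_nonneg_left (hp v) hpos hDle
        · have hDv : D S' v = 0 := le_antisymm hle (hDnonneg S' v)
          have hpv : p v = 0 := le_antisymm (hDv ▸ hple S' v hv) (hp v)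
          simp [hpv]
      have hcard : ((insert w T').card : ℝ) = T'.card + 1 := by
        rw [Finset.card_insert_of_notMem hwT']; push_cast; ring
      have h3 := h2.trans hT'sum
      rw [hsum]
      linarith
  · -- all denominators are zero
    refine ⟨∅, Finset.empty_subset _, by simp, ?_⟩
    push_neg at h
    have : ∀ v ∈ S, p v / D S v = 0 := by
      intro v hv
      have hDv : D S v = 0 := le_antisymm (h v hv) (hDnonneg S v)
      simp [hDv]
    rw [Finset.sum_congr rfl this]
    simp

/-- **Probability-ratio sum bounded by the independence number.**
Let `G` be an undirected graph on a finite vertex set `V` with independence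
number `α`, and let `p : V → ℝ≥0` sum to one.  Then
`Σ_v p_v / (p_v + Σ_{u ∼ v} p_u) ≤ α`, where the denominator is the total
probability of the closed neighborhood of `v` (in Lean, a term with vanishing
denominator is `0`, matching the stated convention since its numerator also
vanishes). -/
theorem probability_ratio_sum_le_independence_number
    (V : Type) [Fintype V] (G : SimpleGraph V) [DecidableRel G.Adj]
    (p : V → ℝ) (hp : ∀ v, 0 ≤ p v) (hp1 : ∑ v, p v = 1)
    (α : ℕ)
    (hα : IsGreatest
      {n : ℕ | ∃ S : Finset V, (∀ a ∈ S, ∀ b ∈ S, ¬ G.Adj a b) ∧ S.card = n} α) :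
    ∑ v, p v / (p v + ∑ u ∈ G.neighborFinset v, p u) ≤ (α : ℝ) := by
  classical
  obtain ⟨T, _, hTind, hTsum⟩ := key_lemma V G p hp Finset.univ
  have hden : ∀ v, ∑ u ∈ (Finset.univ.filter (fun u => u = v ∨ G.Adj v u)), p u
      = p v + ∑ u ∈ G.neighborFinset v, p u := by
    intro v
    have hset : Finset.univ.filter (fun u => u = v ∨ G.Adj v u)
        = insert v (G.neighborFinset v) := by
      ext u; simp [SimpleGraph.mem_neighborFinset, eq_comm]
    rw [hset, Finset.sum_insert (by simp)]
  have hTcard : T.card ≤ α := hα.2 ⟨T, hTind, rfl⟩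
  calc ∑ v, p v / (p v + ∑ u ∈ G.neighborFinset v, p u)
      = ∑ v ∈ Finset.univ, p v / (∑ u ∈ Finset.univ.filter (fun u => u = v ∨ G.Adj v u), p u) := by
        refine Finset.sum_congr rfl (fun v _ => ?_); rw [hden v]
    _ ≤ (T.card : ℝ) := hTsum
    _ ≤ (α : ℝ) := by exact_mod_cast hTcard
end
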